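/- Let M be a square-integrable càdlàg martingale with M_0 = 0 satisfying E[M_t²] ≤ C·t for all t ≤ T, and define L_t := ∫_0^t u dM_u and Y_t := −L_t/t for t > 0, Y_0 = 0. If E[[L]_t] ≤ (C/3)t³ for t ≤ T, then E[Y_t²] ≤ (C/3)·t for all 0 < t ≤ T, and Y satisfies Y_t = −∫_0^t (Y_s/s) ds − M_t. -/

import Mathlib

open MeasureTheory Set Filter

open scoped ENNReal NNReal Topology


lemma aux_cadlag_bdd {f : ℝ → ℝ}
    (hrc : ∀ t : ℝ, ContinuousWithinAt f (Ici t) t)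
    (hll : ∀ t : ℝ, ∃ l : ℝ, Tendsto f (nhdsWithin t (Iio t)) (nhds l))
    (a b : ℝ) : ∃ K : ℝ, ∀ x ∈ Icc a b, |f x| ≤ K := by
  refine (isCompact_Icc (a := a) (b := b)).induction_on
    (p := fun s => ∃ K : ℝ, ∀ x ∈ s, |f x| ≤ K) ⟨0, by simp⟩
    (fun s t hst ⟨K, hK⟩ => ⟨K, fun x hx => hK x (hst hx)⟩)
    (fun s t ⟨K, hK⟩ ⟨K', hK'⟩ => ⟨max K K', fun x hx => by
      rcases hx with hx | hx
      · exact (hK x hx).trans (le_max_left _ _)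
      · exact (hK' x hx).trans (le_max_right _ _)⟩)
    (fun x _ => ?_)
  obtain ⟨l, hl⟩ := hll x
  have h1 : ∀ᶠ y in nhdsWithin x (Ici x), |f y| ≤ |f x| + 1 := by
    have := (hrc x).tendsto (Metric.closedBall_mem_nhds (f x) one_pos)
    filter_upwards [this] with y hy
    have : |f y - f x| ≤ 1 := by simpa [Real.dist_eq] using hy
    calc |f y| = |f y - f x + f x| := by ring_nf
    _ ≤ |f y - f x| + |f x| := abs_add_le _ _
    _ ≤ |f x| + 1 := by linarith
  have h2 : ∀ᶠ y in nhdsWithin x (Iio x), |f y| ≤ |l| + 1 := by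
    have := hl (Metric.closedBall_mem_nhds l one_pos)
    filter_upwards [this] with y hy
    have : |f y - l| ≤ 1 := by simpa [Real.dist_eq] using hy
    calc |f y| = |f y - l + l| := by ring_nf
    _ ≤ |f y - l| + |l| := abs_add_le _ _
    _ ≤ |l| + 1 := by linarith
  have h3 : ∀ᶠ y in nhds x, |f y| ≤ max (|f x| + 1) (|l| + 1) := by
    rw [← nhdsLT_sup_nhdsGE x, eventually_sup]
    constructor
    · filter_upwards [h2] with y hy using hy.trans (le_max_right _ _)
    · filter_upwards [h1] with y hy using hy.trans (le_max_left _ _)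
  refine ⟨{y | |f y| ≤ max (|f x| + 1) (|l| + 1)}, ?_, ⟨_, fun y hy => hy⟩⟩
  exact mem_nhdsWithin_of_mem_nhds h3

lemma aux_jointMeas {Ω : Type*} [MeasurableSpace Ω] {M : ℝ → Ω → ℝ}
    (hrc : ∀ ω, ∀ t : ℝ, ContinuousWithinAt (fun s => M s ω) (Ici t) t)
    (hmeas : ∀ t : ℝ, Measurable (M t)) :
    Measurable (Function.uncurry M) := by
  have happrox : ∀ n : ℕ,
      Measurable (fun p : ℝ × Ω => M ((⌈p.1 * 2 ^ n⌉ : ℤ) / 2 ^ n) p.2) := by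
    intro n
    have h1 : Measurable (fun q : Ω × ℤ => M ((q.2 : ℝ) / 2 ^ n) q.1) :=
      measurable_from_prod_countable_left (fun k : ℤ => hmeas ((k : ℝ) / 2 ^ n))
    exact h1.comp ((measurable_snd.prodMk
      ((Int.measurable_ceil.comp (measurable_fst.mul measurable_const)))))
  refine measurable_of_tendsto_metrizable happrox ?_
  rw [tendsto_pi_nhds]
  rintro ⟨s, ω⟩
  have hges : ∀ n : ℕ, s ≤ (⌈s * 2 ^ n⌉ : ℤ) / 2 ^ n := by
    intro n
    rw [le_div_iff₀ (by positivity)]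
    exact Int.le_ceil _
  have hles : ∀ n : ℕ, ((⌈s * 2 ^ n⌉ : ℤ) : ℝ) / 2 ^ n ≤ s + (1 / 2) ^ n := by
    intro n
    rw [div_le_iff₀ (by positivity)]
    have := Int.ceil_lt_add_one (s * 2 ^ n)
    have h2 : ((1:ℝ) / 2) ^ n * 2 ^ n = 1 := by
      rw [← mul_pow]; norm_num
    nlinarith [this]
  have htend : Tendsto (fun n : ℕ => ((⌈s * 2 ^ n⌉ : ℤ) : ℝ) / 2 ^ n) atTop (nhds s) := by
    have h0 : Tendsto (fun n : ℕ => s + ((1:ℝ) / 2) ^ n) atTop (nhds (s + 0)) :=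
      tendsto_const_nhds.add (tendsto_pow_atTop_nhds_zero_of_lt_one (by norm_num) (by norm_num))
    rw [add_zero] at h0
    exact tendsto_of_tendsto_of_tendsto_of_le_of_le tendsto_const_nhds h0 hges hles
  have htend' : Tendsto (fun n : ℕ => ((⌈s * 2 ^ n⌉ : ℤ) : ℝ) / 2 ^ n) atTop
      (nhdsWithin s (Ici s)) :=
    tendsto_nhdsWithin_of_tendsto_nhds_of_eventually_within _ htend
      (Eventually.of_forall fun n => hges n)
  exact ((hrc ω s).tendsto).comp htend'

set_option maxHeartbeats 2000000

/-- For a square-integrable càdlàg martingale `M` with `M_0 = 0` and `E[M_t²] ≤ Ct` for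
`t ≤ T`, set `L_t = ∫_0^t u dM_u` (realised pathwise via integration by parts:
`L_t = t M_t - ∫_0^t M_s ds`) and `Y_t = -L_t/t`, `Y_0 = 0`. If `E[[L]_t] ≤ (C/3)t³`
for `t ≤ T` (expressed via `E[L_t²] = E[[L]_t]`), then `E[Y_t²] ≤ (C/3)t` for
`0 < t ≤ T` and `Y_t = -∫_0^t (Y_s/s) ds - M_t`. -/
theorem martingale_weighted_integral_process
    {Ω : Type*} {m0 : MeasurableSpace Ω} (μ : Measure Ω) [IsProbabilityMeasure μ]
    (ℱ : Filtration ℝ m0) (M : ℝ → Ω → ℝ) (T C : ℝ) (hT : 0 < T) (hC : 0 ≤ C)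
    (hmart : Martingale M ℱ μ)
    (hM0 : ∀ ω, M 0 ω = 0)
    -- càdlàg paths
    (hM_rc : ∀ ω, ∀ t : ℝ, ContinuousWithinAt (fun s => M s ω) (Ici t) t)
    (hM_ll : ∀ ω, ∀ t : ℝ, ∃ l : ℝ, Tendsto (fun s => M s ω) (nhdsWithin t (Iio t)) (nhds l))
    (hMsq : ∀ t : ℝ, 0 ≤ t → Integrable (fun ω => M t ω ^ 2) μ)
    (hMbound : ∀ t : ℝ, 0 ≤ t → t ≤ T → (∫ ω, M t ω ^ 2 ∂μ) ≤ C * t)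
    (L : ℝ → Ω → ℝ)
    -- L_t = ∫_0^t u dM_u, realised via integration by parts
    (hLdef : ∀ t : ℝ, 0 ≤ t → ∀ ω, L t ω = t * M t ω - ∫ s in (0 : ℝ)..t, M s ω)
    -- E[[L]_t] ≤ (C/3) t³, using E[L_t²] = E[[L]_t]
    (hLquad : ∀ t : ℝ, 0 ≤ t → t ≤ T → (∫ ω, L t ω ^ 2 ∂μ) ≤ C / 3 * t ^ 3)
    (Y : ℝ → Ω → ℝ)
    (hY0 : ∀ ω, Y 0 ω = 0)
    (hYdef : ∀ t : ℝ, 0 < t → ∀ ω, Y t ω = -(L t ω) / t) :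
    (∀ t : ℝ, 0 < t → t ≤ T → (∫ ω, Y t ω ^ 2 ∂μ) ≤ C / 3 * t) ∧
      ∀ᵐ ω ∂μ, ∀ t : ℝ, 0 ≤ t →
        Y t ω = -(∫ s in (0 : ℝ)..t, Y s ω / s) - M t ω := by
  -- Part 1
  have hYsq : ∀ t : ℝ, 0 < t → ∀ ω, Y t ω ^ 2 = L t ω ^ 2 / t ^ 2 := by
    intro t ht ω
    rw [hYdef t ht]
    field_simp
  have part1 : ∀ t : ℝ, 0 < t → t ≤ T → (∫ ω, Y t ω ^ 2 ∂μ) ≤ C / 3 * t := by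
    intro t ht htT
    have h1 : (∫ ω, Y t ω ^ 2 ∂μ) = (∫ ω, L t ω ^ 2 ∂μ) / t ^ 2 := by
      rw [← integral_div]
      exact integral_congr_ae (Eventually.of_forall fun ω => hYsq t ht ω)
    rw [h1, div_le_iff₀ (by positivity)]
    calc (∫ ω, L t ω ^ 2 ∂μ) ≤ C / 3 * t ^ 3 := hLquad t ht.le htT
    _ = C / 3 * t * t ^ 2 := by ring
  refine ⟨part1, ?_⟩
  -- basic measurability facts
  have hMmeas : ∀ t : ℝ, Measurable (M t) :=
    fun t => ((hmart.stronglyAdapted t).mono (ℱ.le t)).measurable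
  have hjoint : Measurable (Function.uncurry M) := aux_jointMeas hM_rc hMmeas
  have hpath : ∀ ω, Measurable fun s => M s ω := fun ω =>
    hjoint.comp (measurable_id.prodMk measurable_const)
  have hMint : ∀ ω, ∀ a b : ℝ, IntervalIntegrable (fun s => M s ω) volume a b := by
    intro ω a b
    obtain ⟨K, hK⟩ := aux_cadlag_bdd (hM_rc ω) (hM_ll ω) (min a b) (max a b)
    rw [intervalIntegrable_iff]
    refine Measure.integrableOn_of_bounded (M := K) (measure_Ioc_lt_top).ne ((hpath ω).aestronglyMeasurable) ?_
    filter_upwards [ae_restrict_mem measurableSet_uIoc] with s hs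
    exact hK s (Ioc_subset_Icc_self hs)
  set G : ℝ → Ω → ℝ := fun s ω => ∫ u in (0 : ℝ)..s, M u ω with hGdef
  have hGcont : ∀ ω, Continuous fun s => G s ω := fun ω =>
    intervalIntegral.continuous_primitive (hMint ω) 0
  have hswap : StronglyMeasurable fun q : Ω × ℝ => M q.2 q.1 :=
    (hjoint.comp measurable_swap).stronglyMeasurable
  have hsetint : ∀ a b : ℝ, Measurable fun ω => ∫ u in Ioc a b, M u ω := by
    intro a b
    exact (hswap.integral_prod_right' (ν := volume.restrict (Ioc a b))).measurable
  have hGmeas : ∀ s : ℝ, Measurable fun ω => G s ω := by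
    intro s
    have : (fun ω => G s ω) =
        fun ω => (∫ u in Ioc 0 s, M u ω) - ∫ u in Ioc s 0, M u ω := rfl
    rw [this]
    exact (hsetint 0 s).sub (hsetint s 0)
  have hGjoint : StronglyMeasurable (Function.uncurry G) :=
    stronglyMeasurable_uncurry_of_continuous_of_stronglyMeasurable
      (fun ω => hGcont ω) (fun s => (hGmeas s).stronglyMeasurable)
  have hYeq : ∀ s : ℝ, 0 < s → ∀ ω, Y s ω = G s ω / s - M s ω := by
    intro s hs ω
    rw [hYdef s hs, hLdef s hs.le]
    have : G s ω = ∫ u in (0 : ℝ)..s, M u ω := rfl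
    rw [← this]
    field_simp
    ring
  have hF0 : Measurable fun p : ℝ × Ω => (G p.1 p.2 / p.1 - M p.1 p.2) / p.1 :=
    ((hGjoint.measurable.div measurable_fst).sub hjoint).div measurable_fst
  -- Integrability of G s ^ 2 and L s ^ 2 for 0 < s ≤ T
  have hconv : ∀ x : ℝ, (‖x‖₊ : ℝ≥0∞) ^ (2 : ℝ) = ENNReal.ofReal (x ^ 2) := by
    intro x
    rw [show (2 : ℝ) = ((2 : ℕ) : ℝ) by norm_num, ENNReal.rpow_natCast]
    rw [show x ^ 2 = |x| ^ 2 from (sq_abs _).symm, ENNReal.ofReal_pow (abs_nonneg _),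
      ← enorm_eq_nnnorm, Real.enorm_eq_ofReal_abs]
  have hMusq : ∀ u : ℝ, 0 ≤ u → u ≤ T →
      (∫⁻ ω, (‖M u ω‖₊ : ℝ≥0∞) ^ (2 : ℝ) ∂μ) ≤ ENNReal.ofReal (C * u) := by
    intro u hu huT
    simp_rw [hconv]
    rw [← ofReal_integral_eq_lintegral_ofReal (hMsq u hu)
      (Eventually.of_forall fun ω => sq_nonneg _)]
    exact ENNReal.ofReal_le_ofReal (hMbound u hu huT)
  have hconj : Real.HolderConjugate 2 2 := Real.HolderConjugate.two_two
  have hGsq : ∀ s : ℝ, 0 < s → s ≤ T → Integrable (fun ω => G s ω ^ 2) μ := by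
    intro s hs hsT
    refine ⟨((hGmeas s).pow_const 2).aestronglyMeasurable, ?_⟩
    have key : ∀ ω, (‖G s ω ^ 2‖₊ : ℝ≥0∞) ≤
        ENNReal.ofReal s * ∫⁻ u in Ioc 0 s, (‖M u ω‖₊ : ℝ≥0∞) ^ (2 : ℝ) ∂volume := by
      intro ω
      have step1 : (‖G s ω‖₊ : ℝ≥0∞) ≤ ∫⁻ u in Ioc 0 s, (‖M u ω‖₊ : ℝ≥0∞) ∂volume := by
        have : G s ω = ∫ u in Ioc 0 s, M u ω ∂volume := intervalIntegral.integral_of_le hs.le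
        rw [this]
        exact enorm_integral_le_lintegral_enorm _
      have step2 : (∫⁻ u in Ioc 0 s, (‖M u ω‖₊ : ℝ≥0∞) ∂volume) ≤
          (∫⁻ u in Ioc 0 s, (‖M u ω‖₊ : ℝ≥0∞) ^ (2 : ℝ) ∂volume) ^ (1/2 : ℝ) *
            (ENNReal.ofReal s) ^ (1/2 : ℝ) := by
        have := ENNReal.lintegral_mul_le_Lp_mul_Lq (volume.restrict (Ioc 0 s)) hconj
          (f := fun u => (‖M u ω‖₊ : ℝ≥0∞)) (g := 1)
          ((hpath ω).enorm.aemeasurable) aemeasurable_const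
        simp only [Pi.mul_apply, Pi.one_apply, mul_one, ENNReal.one_rpow] at this
        rwa [lintegral_one, Measure.restrict_apply_univ, Real.volume_Ioc, sub_zero] at this
      have step3 : (‖G s ω ^ 2‖₊ : ℝ≥0∞) = (‖G s ω‖₊ : ℝ≥0∞) ^ (2 : ℕ) := by
        rw [← ENNReal.coe_pow]
        norm_cast
        rw [sq, sq, nnnorm_mul]
      rw [step3]
      calc ((‖G s ω‖₊ : ℝ≥0∞)) ^ (2 : ℕ)
          ≤ ((∫⁻ u in Ioc 0 s, (‖M u ω‖₊ : ℝ≥0∞) ^ (2 : ℝ) ∂volume) ^ (1/2 : ℝ) *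
            (ENNReal.ofReal s) ^ (1/2 : ℝ)) ^ (2 : ℕ) :=
            pow_le_pow_left' (step1.trans step2) 2
      _ = ENNReal.ofReal s * ∫⁻ u in Ioc 0 s, (‖M u ω‖₊ : ℝ≥0∞) ^ (2 : ℝ) ∂volume := by
            rw [mul_pow, ← ENNReal.rpow_natCast (_ ^ (1/2 : ℝ)) 2,
              ← ENNReal.rpow_natCast ((ENNReal.ofReal s) ^ (1/2 : ℝ)) 2,
              ← ENNReal.rpow_mul, ← ENNReal.rpow_mul]
            norm_num [mul_comm]
    have hswapsq : Measurable fun q : Ω × ℝ => (‖M q.2 q.1‖₊ : ℝ≥0∞) ^ (2 : ℝ) := by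
      have h1 : Measurable fun q : Ω × ℝ => (‖M q.2 q.1‖₊ : ℝ≥0∞) :=
        (hjoint.comp measurable_swap).enorm
      exact h1.pow_const (2 : ℝ)
    calc (∫⁻ ω, (‖G s ω ^ 2‖₊ : ℝ≥0∞) ∂μ)
        ≤ ∫⁻ ω, ENNReal.ofReal s *
            (∫⁻ u in Ioc 0 s, (‖M u ω‖₊ : ℝ≥0∞) ^ (2 : ℝ) ∂volume) ∂μ := lintegral_mono key
    _ = ENNReal.ofReal s *
          ∫⁻ ω, (∫⁻ u in Ioc 0 s, (‖M u ω‖₊ : ℝ≥0∞) ^ (2 : ℝ) ∂volume) ∂μ :=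
          lintegral_const_mul' _ _ ENNReal.ofReal_ne_top
    _ = ENNReal.ofReal s *
          ∫⁻ u in Ioc 0 s, (∫⁻ ω, (‖M u ω‖₊ : ℝ≥0∞) ^ (2 : ℝ) ∂μ) ∂volume := by
          rw [lintegral_lintegral_swap hswapsq.aemeasurable]
    _ ≤ ENNReal.ofReal s * ∫⁻ _ in Ioc 0 s, ENNReal.ofReal (C * s) ∂volume := by
          refine mul_le_mul_of_nonneg_left ?_ (by positivity)
          refine lintegral_mono_ae ?_
          filter_upwards [ae_restrict_mem measurableSet_Ioc] with u hu
          refine (hMusq u hu.1.le (hu.2.trans hsT)).trans (ENNReal.ofReal_le_ofReal ?_)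
          exact mul_le_mul_of_nonneg_left hu.2 hC
    _ < ⊤ := by
          rw [setLIntegral_const, Real.volume_Ioc, sub_zero]
          exact ENNReal.mul_lt_top ENNReal.ofReal_lt_top
            (ENNReal.mul_lt_top ENNReal.ofReal_lt_top ENNReal.ofReal_lt_top)
  have hLsq : ∀ s : ℝ, 0 < s → s ≤ T → Integrable (fun ω => L s ω ^ 2) μ := by
    intro s hs hsT
    have hLrw : (fun ω => L s ω ^ 2) = fun ω => (s * M s ω - G s ω) ^ 2 :=
      funext fun ω => by rw [hLdef s hs.le]
    rw [hLrw]
    have hint : Integrable (fun ω => 2 * (s ^ 2 * M s ω ^ 2) + 2 * G s ω ^ 2) μ :=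
      (((hMsq s hs.le).const_mul (s ^ 2)).const_mul 2).add ((hGsq s hs hsT).const_mul 2)
    refine hint.mono' ((((hMmeas s).const_mul s).sub (hGmeas s)).pow_const
      2).aestronglyMeasurable ?_
    refine Eventually.of_forall fun ω => ?_
    rw [Real.norm_eq_abs, abs_of_nonneg (sq_nonneg _)]
    nlinarith [sq_nonneg (s * M s ω + G s ω)]
  have hYsqint : ∀ s : ℝ, 0 < s → s ≤ T → Integrable (fun ω => Y s ω ^ 2) μ := by
    intro s hs hsT
    have : (fun ω => Y s ω ^ 2) = fun ω => L s ω ^ 2 / s ^ 2 := by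
      funext ω; exact hYsq s hs ω
    rw [this]
    exact (hLsq s hs hsT).div_const _
  -- almost-sure integrability of s ↦ Y s ω / s on (0, T]
  have hYmeas : ∀ s : ℝ, 0 < s → Measurable (Y s) := by
    intro s hs
    have : Y s = fun ω => G s ω / s - M s ω := funext (hYeq s hs)
    rw [this]
    exact ((hGmeas s).div_const s).sub (hMmeas s)
  have hYb : ∀ s : ℝ, 0 < s → s ≤ T →
      (∫⁻ ω, (‖Y s ω‖₊ : ℝ≥0∞) ∂μ) ≤ ENNReal.ofReal (Real.sqrt (C / 3 * s)) := by
    intro s hs hsT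
    have holder := ENNReal.lintegral_mul_le_Lp_mul_Lq μ hconj
      (f := fun ω => (‖Y s ω‖₊ : ℝ≥0∞)) (g := 1)
      ((hYmeas s hs).enorm.aemeasurable) aemeasurable_const
    simp only [Pi.mul_apply, Pi.one_apply, mul_one, ENNReal.one_rpow] at holder
    rw [lintegral_one, measure_univ, ENNReal.one_rpow, mul_one] at holder
    have h2 : (∫⁻ ω, (‖Y s ω‖₊ : ℝ≥0∞) ^ (2 : ℝ) ∂μ) = ENNReal.ofReal (∫ ω, Y s ω ^ 2 ∂μ) := by
      simp_rw [hconv]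
      rw [ofReal_integral_eq_lintegral_ofReal (hYsqint s hs hsT)
        (Eventually.of_forall fun ω => sq_nonneg _)]
    rw [h2] at holder
    refine holder.trans ?_
    have h3 : (ENNReal.ofReal (∫ ω, Y s ω ^ 2 ∂μ)) ^ (1/2 : ℝ) ≤
        (ENNReal.ofReal (C / 3 * s)) ^ (1/2 : ℝ) :=
      ENNReal.rpow_le_rpow (ENNReal.ofReal_le_ofReal (part1 s hs hsT)) (by norm_num)
    refine h3.trans ?_
    rw [ENNReal.ofReal_rpow_of_nonneg (by positivity) (by norm_num),
      Real.sqrt_eq_rpow]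
  have hFsect : ∀ ω, Measurable fun s : ℝ => (G s ω / s - M s ω) / s := fun ω =>
    (((hGcont ω).measurable.div measurable_id).sub (hpath ω)).div measurable_id
  have hswapF : Measurable fun q : Ω × ℝ => (‖(G q.2 q.1 / q.2 - M q.2 q.1) / q.2‖₊ : ℝ≥0∞) :=
    (hF0.comp measurable_swap).enorm
  have hcongr : ∀ ω, (∫⁻ s in Ioc 0 T, (‖Y s ω / s‖₊ : ℝ≥0∞) ∂volume) =
      ∫⁻ s in Ioc 0 T, (‖(G s ω / s - M s ω) / s‖₊ : ℝ≥0∞) ∂volume := by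
    intro ω
    refine setLIntegral_congr_fun measurableSet_Ioc (fun s hs => ?_)
    rw [hYeq s hs.1]
  have hIntSqrt : IntegrableOn (fun s => Real.sqrt (C / 3 * s) * (1 / s)) (Ioc 0 T) volume := by
    have h1 : IntervalIntegrable (fun x : ℝ => Real.sqrt (C / 3) * x ^ (-(1/2) : ℝ))
        volume 0 T := (intervalIntegral.intervalIntegrable_rpow' (by norm_num)).const_mul _
    have h2 : IntegrableOn (fun x : ℝ => Real.sqrt (C / 3) * x ^ (-(1/2) : ℝ))
        (Ioc 0 T) volume := by
      rw [intervalIntegrable_iff_integrableOn_Ioc_of_le hT.le] at h1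
      exact h1
    refine h2.congr_fun ?_ measurableSet_Ioc
    intro s hs
    have hs0 : (0 : ℝ) < s := hs.1
    have h5 : s ^ (-(1/2) : ℝ) = (Real.sqrt s)⁻¹ := by
      rw [Real.rpow_neg hs0.le, ← Real.sqrt_eq_rpow]
    have key : Real.sqrt s * (1 / s) = (Real.sqrt s)⁻¹ := by
      have hss : Real.sqrt s ≠ 0 := ne_of_gt (Real.sqrt_pos.mpr hs0)
      field_simp
      exact Real.sq_sqrt hs0.le
    show Real.sqrt (C / 3) * s ^ (-(1/2) : ℝ) = Real.sqrt (C / 3 * s) * (1 / s)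
    rw [h5, Real.sqrt_mul (by positivity) s, mul_assoc, key]
  have hBnd : (∫⁻ s in Ioc 0 T, ENNReal.ofReal (Real.sqrt (C / 3 * s) * (1 / s)) ∂volume) < ⊤ := by
    refine lt_of_le_of_lt (lintegral_mono fun s => Real.ofReal_le_enorm _) ?_
    exact hIntSqrt.2
  have hkey : (∫⁻ ω, (∫⁻ s in Ioc 0 T, (‖(G s ω / s - M s ω) / s‖₊ : ℝ≥0∞) ∂volume) ∂μ) < ⊤ := by
    rw [lintegral_lintegral_swap hswapF.aemeasurable]
    refine lt_of_le_of_lt ?_ hBnd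
    refine lintegral_mono_ae ?_
    filter_upwards [ae_restrict_mem measurableSet_Ioc] with s hs
    have hs0 : (0 : ℝ) < s := hs.1
    have hpt : ∀ ω, (‖(G s ω / s - M s ω) / s‖₊ : ℝ≥0∞) =
        (‖Y s ω‖₊ : ℝ≥0∞) * ENNReal.ofReal (1 / s) := by
      intro ω
      rw [← hYeq s hs0 ω, div_eq_mul_one_div, nnnorm_mul, ENNReal.coe_mul]
      congr 1
      rw [← enorm_eq_nnnorm, Real.enorm_eq_ofReal_abs, abs_of_pos (by positivity)]
    simp_rw [hpt]
    rw [lintegral_mul_const'' _ (f := fun ω => (‖Y s ω‖₊ : ℝ≥0∞))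
      ((hYmeas s hs0).enorm.aemeasurable)]
    rw [ENNReal.ofReal_mul (Real.sqrt_nonneg _)]
    exact mul_le_mul_of_nonneg_right (hYb s hs0 hs.2) (by positivity)
  have hgood : ∀ᵐ ω ∂μ, IntegrableOn (fun s => Y s ω / s) (Ioc 0 T) volume := by
    have hmeas_outer : Measurable fun ω =>
        ∫⁻ s in Ioc 0 T, (‖(G s ω / s - M s ω) / s‖₊ : ℝ≥0∞) ∂volume :=
      hswapF.lintegral_prod_right'
    filter_upwards [ae_lt_top hmeas_outer hkey.ne] with ω hω
    refine ⟨?_, ?_⟩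
    · refine AEStronglyMeasurable.congr
        ((hFsect ω).aestronglyMeasurable (μ := volume.restrict (Ioc 0 T))) ?_
      filter_upwards [ae_restrict_mem measurableSet_Ioc] with s hs
      rw [hYeq s hs.1]
    · show (∫⁻ s in Ioc 0 T, (‖Y s ω / s‖₊ : ℝ≥0∞) ∂volume) < ⊤
      rw [hcongr ω]
      exact hω
  -- pathwise integrability on (a, b] when 0 < a
  have htail : ∀ ω, ∀ a b : ℝ, 0 < a → IntegrableOn (fun s => Y s ω / s) (Ioc a b) volume := by
    intro ω a b ha
    rcases le_or_gt b a with hba | hab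
    · rw [Ioc_eq_empty (not_lt.mpr hba)]
      exact integrableOn_empty
    obtain ⟨K₁, hK₁⟩ := isCompact_Icc.exists_bound_of_continuousOn
      ((hGcont ω).continuousOn : ContinuousOn (fun s => G s ω) (Icc a b))
    obtain ⟨K₂, hK₂⟩ := aux_cadlag_bdd (hM_rc ω) (hM_ll ω) a b
    have hg : IntegrableOn (fun s => (G s ω / s - M s ω) / s) (Ioc a b) volume := by
      refine Measure.integrableOn_of_bounded (M := (K₁ / a + K₂) / a)
        (measure_Ioc_lt_top).ne ((hFsect ω).aestronglyMeasurable) ?_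
      filter_upwards [ae_restrict_mem measurableSet_Ioc] with s hs
      have hs0 : 0 < s := lt_of_lt_of_le ha hs.1.le
      have hIcc : s ∈ Icc a b := ⟨hs.1.le, hs.2⟩
      have h1 : |G s ω| ≤ K₁ := by
        have := hK₁ s hIcc; rwa [Real.norm_eq_abs] at this
      have h2 : |M s ω| ≤ K₂ := hK₂ s hIcc
      rw [Real.norm_eq_abs, abs_div, abs_of_pos hs0]
      have hK1nn : 0 ≤ K₁ := le_trans (abs_nonneg _) h1
      have h4 : |G s ω / s| ≤ K₁ / a := by
        rw [abs_div, abs_of_pos hs0]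
        calc |G s ω| / s ≤ K₁ / s := (div_le_div_iff_of_pos_right hs0).mpr h1
        _ ≤ K₁ / a := div_le_div_of_nonneg_left hK1nn ha hs.1.le
      have h3 : |G s ω / s - M s ω| ≤ K₁ / a + K₂ :=
        (abs_sub _ _).trans (add_le_add h4 h2)
      have hnn : (0 : ℝ) ≤ K₁ / a + K₂ := le_trans (abs_nonneg _) h3
      calc |G s ω / s - M s ω| / s ≤ (K₁ / a + K₂) / s := (div_le_div_iff_of_pos_right hs0).mpr h3
      _ ≤ (K₁ / a + K₂) / a := div_le_div_of_nonneg_left hnn ha hs.1.le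
    refine hg.congr_fun ?_ measurableSet_Ioc
    intro s hs
    show (G s ω / s - M s ω) / s = Y s ω / s
    rw [hYeq s (lt_of_lt_of_le ha hs.1.le)]
  -- the pathwise identity
  filter_upwards [hgood] with ω hω
  have hIntOn : ∀ t : ℝ, 0 < t → IntegrableOn (fun s => Y s ω / s) (Ioc 0 t) volume := by
    intro t ht'
    rcases le_or_gt t T with h | h
    · exact hω.mono_set (Ioc_subset_Ioc_right h)
    · have h2 := hω.union (htail ω T t hT)
      rwa [Ioc_union_Ioc_eq_Ioc hT.le h.le] at h2
  have hGderiv : ∀ x : ℝ, HasDerivWithinAt (fun u => G u ω) (M x ω) (Ici x) x := fun x =>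
    intervalIntegral.integral_hasDerivWithinAt_right (hMint ω 0 x)
      (((hpath ω).aestronglyMeasurable).stronglyMeasurableAtFilter (l := 𝓝[Ioi x] x))
      ((hM_rc ω x).mono Ioi_subset_Ici_self)
  have hkey2 : ∀ t : ℝ, 0 < t →
      (∫ s in Ioc 0 t, Y s ω / s ∂volume) = -(G t ω) / t := by
    intro t ht'
    set a : ℕ → ℝ := fun n => t / (n + 1) with ha
    have hapos : ∀ n, 0 < a n := fun n => div_pos ht' (by positivity)
    have halet : ∀ n, a n ≤ t := by
      intro n
      rw [ha, div_le_iff₀ (by positivity)]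
      nlinarith [ht'.le, Nat.cast_nonneg (α := ℝ) n]
    have hstep : ∀ n, (∫ s in Ioc (a n) t, Y s ω / s ∂volume) =
        (-(G t ω) / t) - (-(G (a n) ω) / (a n)) := by
      intro n
      have hcont : ContinuousOn (fun s => -(G s ω) / s) (Icc (a n) t) :=
        ((hGcont ω).neg.continuousOn).div continuousOn_id
          (fun x hx => ne_of_gt (lt_of_lt_of_le (hapos n) hx.1))
      have hderiv : ∀ x ∈ Ioo (a n) t,
          HasDerivWithinAt (fun s => -(G s ω) / s) (Y x ω / x) (Ioi x) x := by
        intro x hx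
        have hx0 : 0 < x := lt_trans (hapos n) hx.1
        have h1 : HasDerivWithinAt (fun u => -(G u ω)) (-(M x ω)) (Ioi x) x :=
          ((hGderiv x).mono Ioi_subset_Ici_self).neg
        have h2 : HasDerivWithinAt (fun u : ℝ => u) 1 (Ioi x) x :=
          (hasDerivWithinAt_id x _)
        have h3 := h1.div h2 (ne_of_gt hx0)
        refine h3.congr_deriv ?_
        rw [hYeq x hx0]
        field_simp
        ring
      have hii : IntervalIntegrable (fun s => Y s ω / s) volume (a n) t := by
        rw [intervalIntegrable_iff_integrableOn_Ioc_of_le (halet n)]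
        exact (hIntOn t ht').mono_set (Ioc_subset_Ioc_left (hapos n).le)
      have hftc := intervalIntegral.integral_eq_sub_of_hasDeriv_right_of_le
        (halet n) hcont hderiv hii
      rw [← intervalIntegral.integral_of_le (halet n), hftc]
    have hmono : Monotone fun n => Ioc (a n) t := by
      intro m n hmn
      refine Ioc_subset_Ioc_left ?_
      rw [ha]
      refine div_le_div_of_nonneg_left ht'.le (by positivity) ?_
      have h7 : (m : ℝ) ≤ n := Nat.cast_le.mpr hmn
      linarith
    have hunion : (⋃ n, Ioc (a n) t) = Ioc 0 t := by
      ext x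
      simp only [mem_iUnion, mem_Ioc]
      constructor
      · rintro ⟨n, h1, h2⟩
        exact ⟨lt_trans (hapos n) h1, h2⟩
      · rintro ⟨hx0, hxt⟩
        obtain ⟨n, hn⟩ := exists_nat_gt (t / x)
        refine ⟨n, ?_, hxt⟩
        rw [ha, div_lt_iff₀ (by positivity)]
        have h4 : t / x < (n : ℝ) + 1 := hn.trans (by linarith)
        calc t = (t / x) * x := by field_simp
        _ < ((n : ℝ) + 1) * x := by exact mul_lt_mul_of_pos_right h4 hx0
        _ = x * ((n : ℝ) + 1) := by ring
    have htendInt := tendsto_setIntegral_of_monotone (fun n => measurableSet_Ioc) hmono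
      (by rw [hunion]; exact hIntOn t ht')
    rw [hunion] at htendInt
    have hGslope : Tendsto (fun n => G (a n) ω / (a n)) atTop (𝓝 0) := by
      have h0 : HasDerivWithinAt (fun u => G u ω) 0 (Ici 0) 0 := by
        have := hGderiv 0
        rwa [hM0 ω] at this
      rw [hasDerivWithinAt_iff_tendsto_slope, Ici_sdiff_left] at h0
      have hatend : Tendsto a atTop (nhdsWithin 0 (Ioi 0)) := by
        refine tendsto_nhdsWithin_of_tendsto_nhds_of_eventually_within _ ?_
          (Eventually.of_forall fun n => hapos n)
        have h5 : Tendsto (fun n : ℕ => t * (1 / ((n : ℝ) + 1))) atTop (𝓝 (t * 0)) :=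
          tendsto_const_nhds.mul tendsto_one_div_add_atTop_nhds_zero_nat
        rw [mul_zero] at h5
        refine h5.congr fun n => ?_
        rw [ha, mul_one_div]
      have h6 := h0.comp hatend
      have hG0 : G 0 ω = 0 := intervalIntegral.integral_same
      refine h6.congr fun n => ?_
      simp only [Function.comp_apply, slope_def_field, hG0, sub_zero]
    have hrhs : Tendsto (fun n => (-(G t ω) / t) - (-(G (a n) ω) / (a n))) atTop
        (𝓝 ((-(G t ω) / t) - 0)) := by
      refine tendsto_const_nhds.sub ?_
      have := hGslope.neg
      rw [neg_zero] at this
      exact this.congr fun n => (neg_div _ _).symm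
    rw [sub_zero] at hrhs
    have hfeq : (fun n => ∫ s in Ioc (a n) t, Y s ω / s ∂volume) =
        fun n => (-(G t ω) / t) - (-(G (a n) ω) / (a n)) := funext hstep
    rw [hfeq] at htendInt
    exact tendsto_nhds_unique htendInt hrhs
  intro t ht
  rcases eq_or_lt_of_le ht with rfl | ht
  · simp [hY0 ω, hM0 ω]
  rw [intervalIntegral.integral_of_le ht.le, hkey2 t ht, hYeq t ht]
  have hGt : G t ω = ∫ u in (0 : ℝ)..t, M u ω := rfl
  ring
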